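/- If a graph G is factored into graphs H and K (A = BC for adjacency matrices) and vertices u and v lie in the same connected component of H, then deg_K(u) = deg_K(v). -/
import Mathlib


open SimpleGraph Matrix Finset

private lemma rowsum {n : ℕ} (K : SimpleGraph (Fin n)) [DecidableRel K.Adj] (v : Fin n) :
    ∑ j, K.adjMatrix ℝ v j = (K.degree v : ℝ) := by
  simp [adjMatrix_apply, SimpleGraph.degree, SimpleGraph.neighborFinset_def,
    Finset.sum_boole]

private lemma edge_deg {n : ℕ} (G H K : SimpleGraph (Fin n))
    [DecidableRel G.Adj] [DecidableRel H.Adj] [DecidableRel K.Adj]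
    (hfac : G.adjMatrix ℝ = H.adjMatrix ℝ * K.adjMatrix ℝ)
    {u v : Fin n} (huv : H.Adj u v) :
    K.degree u = K.degree v := by
  set A := G.adjMatrix ℝ with hA
  set B := H.adjMatrix ℝ with hB
  set C := K.adjMatrix ℝ with hC
  have hAT : Aᵀ = A := transpose_adjMatrix G
  have hBT : Bᵀ = B := transpose_adjMatrix H
  have hCT : Cᵀ = C := transpose_adjMatrix K
  have hcomm : B * C = C * B := by
    calc B * C = A := hfac.symm
    _ = Aᵀ := hAT.symm
    _ = (B * C)ᵀ := by rw [hfac]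
    _ = Cᵀ * Bᵀ := transpose_mul _ _
    _ = C * B := by rw [hBT, hCT]
  have hACsym : (A * C)ᵀ = A * C := by
    calc (A * C)ᵀ = Cᵀ * Aᵀ := transpose_mul _ _
    _ = C * A := by rw [hAT, hCT]
    _ = C * (B * C) := by rw [hfac]
    _ = (C * B) * C := by rw [mul_assoc]
    _ = (B * C) * C := by rw [hcomm]
    _ = A * C := by rw [hfac]
  -- key: if H.Adj x y then (A*C) x y = degK y
  have key : ∀ x y : Fin n, H.Adj x y → (A * C) x y = (K.degree y : ℝ) := by
    intro x y hxy
    have hadj : ∀ j, K.Adj y j → G.Adj x j := by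
      intro j hyj
      by_contra hnot
      have h0 : A x j = 0 := by simp [hA, adjMatrix_apply, hnot]
      have h1 : A x j = ∑ k, B x k * C k j := by rw [hfac]; rfl
      have hterm : (1 : ℝ) ≤ ∑ k, B x k * C k j := by
        have := Finset.single_le_sum (f := fun k => B x k * C k j)
          (fun k _ => mul_nonneg (by simp [hB, adjMatrix_apply]; split_ifs <;> norm_num)
            (by simp [hC, adjMatrix_apply]; split_ifs <;> norm_num)) (Finset.mem_univ y)
        simpa [hB, hC, adjMatrix_apply, hxy, hyj] using this
      rw [← h1, h0] at hterm
      linarith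
    have : (A * C) x y = ∑ j, A x j * C j y := rfl
    rw [this]
    have : ∀ j, A x j * C j y = C y j := by
      intro j
      by_cases hj : K.Adj y j
      · have := hadj j hj
        simp [hA, hC, adjMatrix_apply, this, hj, K.adj_symm hj]
      · have hjy : ¬ K.Adj j y := fun h => hj h.symm
        simp [hC, adjMatrix_apply, hjy, hj]
    rw [Finset.sum_congr rfl (fun j _ => this j), rowsum]
  have h2 := key u v huv
  have h3 := key v u huv.symm
  have h4 : (A * C) u v = (A * C) v u := by
    conv_lhs => rw [← hACsym]
    rfl
  have : (K.degree v : ℝ) = (K.degree u : ℝ) := by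
    rw [← h2, h4, h3]
  exact_mod_cast this.symm

theorem stmt2 {n : ℕ} (G H K : SimpleGraph (Fin n))
    [DecidableRel G.Adj] [DecidableRel H.Adj] [DecidableRel K.Adj]
    (hfac : G.adjMatrix ℝ = H.adjMatrix ℝ * K.adjMatrix ℝ)
    (u v : Fin n) (huv : H.Reachable u v) :
    K.degree u = K.degree v := by
  obtain ⟨w⟩ := huv
  induction w with
  | nil => rfl
  | cons h p ih => exact (edge_deg G H K hfac h).trans ih
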